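/- Let d ≥ 1 and let H be a digraph with at least 2 vertices that has a root v₀, i.e., a vertex from which every vertex of H is reachable by a directed path in H. Let G be a digraph with out-degree at most d. If G contains m pairwise edge-disjoint subgraph copies of H, then there are at least m/d distinct vertices u of G such that u = φ(v₀) for some subgraph copy φ of H in G. -/
import Mathlib


/-- The out-degree of a vertex `v` with respect to an edge set `E`. -/
def outdeg {n : ℕ} (E : Finset (Fin n × Fin n)) (v : Fin n) : ℕ :=
  (E.filter (fun e => e.1 = v)).card

/-- Reachability by a directed path inside the digraph with edge set `HE`. -/
def ReachIn {k : ℕ} (HE : Finset (Fin k × Fin k)) (a b : Fin k) : Prop :=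
  Relation.ReflTransGen (fun x y => (x, y) ∈ HE) a b

/-- `φ` is a subgraph copy of the digraph with edge set `HE` in the digraph
with edge set `GE`. -/
def IsCopy {k n : ℕ} (HE : Finset (Fin k × Fin k)) (GE : Finset (Fin n × Fin n))
    (φ : Fin k → Fin n) : Prop :=
  Function.Injective φ ∧ ∀ e ∈ HE, (φ e.1, φ e.2) ∈ GE

/-- The edge set of the copy given by `φ`. -/
def copyEdges {k n : ℕ} (HE : Finset (Fin k × Fin k)) (φ : Fin k → Fin n) :
    Finset (Fin n × Fin n) :=
  HE.image (fun e => (φ e.1, φ e.2))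

/-- if a `d`-out-bounded digraph `G` contains `m` pairwise edge-disjoint
copies of a rooted digraph `H` (with root `v₀`, at least 2 vertices), then at least
`m/d` distinct vertices of `G` are images of `v₀` under some copy of `H`. -/
theorem many_roots_of_edge_disjoint_copies
    (d : ℕ) (hd : 1 ≤ d) (k : ℕ) (hk : 2 ≤ k)
    (HE : Finset (Fin k × Fin k)) (hHirr : ∀ e ∈ HE, e.1 ≠ e.2)
    (v₀ : Fin k) (hroot : ∀ u : Fin k, ReachIn HE v₀ u)
    (n : ℕ) (E : Finset (Fin n × Fin n)) (hirr : ∀ e ∈ E, e.1 ≠ e.2)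
    (hdeg : ∀ v, outdeg E v ≤ d)
    (m : ℕ) (φ : Fin m → (Fin k → Fin n))
    (hcopy : ∀ j, IsCopy HE E (φ j))
    (hdisj : ∀ j j', j ≠ j' → Disjoint (copyEdges HE (φ j)) (copyEdges HE (φ j'))) :
    (m : ℝ) / (d : ℝ) ≤
      (({u : Fin n | ∃ ψ : Fin k → Fin n, IsCopy HE E ψ ∧ ψ v₀ = u}).ncard : ℝ) := by

  classical
  obtain ⟨u, hu⟩ : ∃ u : Fin k, u ≠ v₀ := by
    haveI : Nontrivial (Fin k) := Fin.nontrivial_iff_two_le.mpr hk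
    exact exists_ne v₀
  obtain ⟨w, hw⟩ : ∃ w, (v₀, w) ∈ HE := by
    rcases (hroot u).cases_head with h | ⟨c, hc, _⟩
    · exact absurd h.symm hu
    · exact ⟨c, hc⟩
  set S : Set (Fin n) := {u | ∃ ψ, IsCopy HE E ψ ∧ ψ v₀ = u} with hS
  have hSfin : S.Finite := Set.toFinite S
  set Sf : Finset (Fin n) := hSfin.toFinset with hSf
  have key : m ≤ d * Sf.card := by
    set f : Fin m → Fin n × Fin n := fun j => ((φ j) v₀, (φ j) w) with hf
    have hinj : Function.Injective f := by
      intro j j' h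
      by_contra hne
      have hmem : f j ∈ copyEdges HE (φ j) := Finset.mem_image.mpr ⟨(v₀, w), hw, rfl⟩
      have hmem' : f j ∈ copyEdges HE (φ j') := by
        rw [h]; exact Finset.mem_image.mpr ⟨(v₀, w), hw, rfl⟩
      exact Finset.disjoint_left.mp (hdisj j j' hne) hmem hmem'
    have hsub : Finset.univ.image f ⊆ (E.filter fun e => e.1 ∈ Sf) := by
      intro e he
      rcases Finset.mem_image.mp he with ⟨j, _, rfl⟩
      refine Finset.mem_filter.mpr ⟨(hcopy j).2 (v₀, w) hw, ?_⟩
      rw [hSf, Set.Finite.mem_toFinset]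
      exact ⟨φ j, hcopy j, rfl⟩
    have h1 : m ≤ (E.filter fun e => e.1 ∈ Sf).card := by
      calc m = (Finset.univ.image f).card := by
              rw [Finset.card_image_of_injective _ hinj, Finset.card_univ, Fintype.card_fin]
        _ ≤ _ := Finset.card_le_card hsub
    have h2 : (E.filter fun e => e.1 ∈ Sf).card ≤ d * Sf.card := by
      have hsub2 : (E.filter fun e => e.1 ∈ Sf) ⊆
          Sf.biUnion (fun v => E.filter (fun e => e.1 = v)) := by
        intro e he
        rcases Finset.mem_filter.mp he with ⟨heE, hv⟩
        exact Finset.mem_biUnion.mpr ⟨e.1, hv, Finset.mem_filter.mpr ⟨heE, rfl⟩⟩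
      calc (E.filter fun e => e.1 ∈ Sf).card
          ≤ (Sf.biUnion (fun v => E.filter (fun e => e.1 = v))).card :=
            Finset.card_le_card hsub2
        _ ≤ ∑ v ∈ Sf, (E.filter (fun e => e.1 = v)).card := Finset.card_biUnion_le
        _ ≤ ∑ _v ∈ Sf, d := Finset.sum_le_sum (fun v _ => hdeg v)
        _ = Sf.card * d := by rw [Finset.sum_const, smul_eq_mul]
        _ = d * Sf.card := mul_comm _ _
    exact le_trans h1 h2
  have hncard : S.ncard = Sf.card := Set.ncard_eq_toFinset_card S hSfin
  have hd0 : (0 : ℝ) < (d : ℝ) := by exact_mod_cast hd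
  rw [div_le_iff₀ hd0]
  rw [hncard]
  calc (m : ℝ) ≤ (d * Sf.card : ℕ) := by exact_mod_cast key
    _ = (Sf.card : ℝ) * d := by push_cast; ring
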